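/- For any distribution P on ℝ^d × ℝ, the map β ↦ L_P(1−β) is convex on [0,1]. -/

import Mathlib

open MeasureTheory
open scoped ENNReal

noncomputable section

/-- A data point: a feature vector in `ℝ^d` together with a real response. -/
abbrev Pt (d : ℕ) : Type := (Fin d → ℝ) × ℝ

/-- `LP d P t` is the shortest possible expected length `L_P(t)` of a (possibly randomized)
prediction interval with marginal coverage at least `t` under `P`: the infimum of
`E[leb(C(X))]` over all randomized maps `C` (with auxiliary randomness from an arbitrary
probability space `Ω'`) satisfying `P(Y ∈ C(X)) ≥ t` for `(X,Y) ∼ P`. -/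
def LP (d : ℕ) (P : Measure (Pt d)) (t : ℝ) : ℝ≥0∞ :=
  sInf {r : ℝ≥0∞ |
    ∃ (Ω' : Type) (_ : MeasurableSpace Ω') (μ' : Measure Ω'),
      IsProbabilityMeasure μ' ∧
      ∃ C : (Fin d → ℝ) → Ω' → Set ℝ,
        MeasurableSet {p : ((Fin d → ℝ) × Ω') × ℝ | p.2 ∈ C p.1.1 p.1.2} ∧
        ENNReal.ofReal t ≤ (P.prod μ') {q : Pt d × Ω' | q.1.2 ∈ C q.1.1 q.2} ∧
        r = ∫⁻ q, volume (C q.1 q.2) ∂((P.map Prod.fst).prod μ')}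

/-- The feasible set of expected lengths at level `t`. -/
def LPSet (d : ℕ) (P : Measure (Pt d)) (t : ℝ) : Set ℝ≥0∞ :=
  {r : ℝ≥0∞ |
    ∃ (Ω' : Type) (_ : MeasurableSpace Ω') (μ' : Measure Ω'),
      IsProbabilityMeasure μ' ∧
      ∃ C : (Fin d → ℝ) → Ω' → Set ℝ,
        MeasurableSet {p : ((Fin d → ℝ) × Ω') × ℝ | p.2 ∈ C p.1.1 p.1.2} ∧
        ENNReal.ofReal t ≤ (P.prod μ') {q : Pt d × Ω' | q.1.2 ∈ C q.1.1 q.2} ∧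
        r = ∫⁻ q, volume (C q.1 q.2) ∂((P.map Prod.fst).prod μ')}

lemma LP_eq_sInf (d : ℕ) (P : Measure (Pt d)) (t : ℝ) : LP d P t = sInf (LPSet d P t) := rfl

/-- Scaling a product measure in the second factor. -/
lemma prod_smul_right {α β : Type*} [MeasurableSpace α] [MeasurableSpace β]
    (μ : Measure α) (ν : Measure β) [SFinite μ] [SFinite ν] (c : ℝ≥0∞) :
    μ.prod (c • ν) = c • μ.prod ν := by
  ext s hs
  rw [Measure.prod_apply hs, Measure.smul_apply, smul_eq_mul, Measure.prod_apply hs,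
    ← lintegral_const_mul c (measurable_measure_prodMk_left hs)]
  simp

/-- Key mixing construction: convex combinations of feasible lengths are feasible for the
mixed level. -/
lemma mix_mem (d : ℕ) (P : Measure (Pt d)) [IsProbabilityMeasure P]
    (s₁ s₂ a b : ℝ) (ha : 0 ≤ a) (hb : 0 ≤ b) (hab : a + b = 1)
    {r₁ r₂ : ℝ≥0∞} (h₁ : r₁ ∈ LPSet d P s₁) (h₂ : r₂ ∈ LPSet d P s₂) :
    ENNReal.ofReal a * r₁ + ENNReal.ofReal b * r₂ ∈ LPSet d P (a * s₁ + b * s₂) := by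
  obtain ⟨Ω₁, m₁, μ₁, hμ₁, C₁, hT₁, hcov₁, hr₁⟩ := h₁
  obtain ⟨Ω₂, m₂, μ₂, hμ₂, C₂, hT₂, hcov₂, hr₂⟩ := h₂
  set A : ℝ≥0∞ := ENNReal.ofReal a with hA
  set B : ℝ≥0∞ := ENNReal.ofReal b with hB
  have hAtop : A ≠ ∞ := ENNReal.ofReal_ne_top
  have hBtop : B ≠ ∞ := ENNReal.ofReal_ne_top
  have hABone : A + B = 1 := by
    rw [hA, hB, ← ENNReal.ofReal_add ha hb, hab, ENNReal.ofReal_one]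
  haveI h1 : IsProbabilityMeasure (μ₁.map (Sum.inl : Ω₁ → Ω₁ ⊕ Ω₂)) :=
    Measure.isProbabilityMeasure_map measurable_inl.aemeasurable
  haveI h2 : IsProbabilityMeasure (μ₂.map (Sum.inr : Ω₂ → Ω₁ ⊕ Ω₂)) :=
    Measure.isProbabilityMeasure_map measurable_inr.aemeasurable
  -- measurability of the graph set
  have hT : MeasurableSet {p : ((Fin d → ℝ) × (Ω₁ ⊕ Ω₂)) × ℝ |
      p.2 ∈ Sum.elim (C₁ p.1.1) (C₂ p.1.1) p.1.2} := by
    let e : ((Fin d → ℝ) × (Ω₁ ⊕ Ω₂)) × ℝ ≃ᵐ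
        (((Fin d → ℝ) × Ω₁) × ℝ) ⊕ (((Fin d → ℝ) × Ω₂) × ℝ) :=
      ((MeasurableEquiv.prodSumDistrib (Fin d → ℝ) Ω₁ Ω₂).prodCongr
        (MeasurableEquiv.refl ℝ)).trans
        (MeasurableEquiv.sumProdDistrib _ _ _)
    have hset : {p : ((Fin d → ℝ) × (Ω₁ ⊕ Ω₂)) × ℝ |
        p.2 ∈ Sum.elim (C₁ p.1.1) (C₂ p.1.1) p.1.2} =
        e ⁻¹' ((Sum.inl '' {p : ((Fin d → ℝ) × Ω₁) × ℝ | p.2 ∈ C₁ p.1.1 p.1.2}) ∪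
          (Sum.inr '' {p : ((Fin d → ℝ) × Ω₂) × ℝ | p.2 ∈ C₂ p.1.1 p.1.2})) := by
      ext ⟨⟨x, ω⟩, y⟩
      cases ω with
      | inl ω₁ =>
          have hel : e ((x, Sum.inl ω₁), y) = Sum.inl ((x, ω₁), y) := rfl
          simp only [Set.mem_setOf_eq, Set.mem_preimage, hel, Set.mem_union]
          constructor
          · intro h; exact Or.inl ⟨((x, ω₁), y), h, rfl⟩
          · rintro (⟨p, hp, hpe⟩ | ⟨p, hp, hpe⟩)
            · obtain rfl : p = ((x, ω₁), y) := Sum.inl_injective hpe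
              exact hp
            · exact absurd hpe (by simp)
      | inr ω₂ =>
          have hel : e ((x, Sum.inr ω₂), y) = Sum.inr ((x, ω₂), y) := rfl
          simp only [Set.mem_setOf_eq, Set.mem_preimage, hel, Set.mem_union]
          constructor
          · intro h; exact Or.inr ⟨((x, ω₂), y), h, rfl⟩
          · rintro (⟨p, hp, hpe⟩ | ⟨p, hp, hpe⟩)
            · exact absurd hpe (by simp)
            · obtain rfl : p = ((x, ω₂), y) := Sum.inr_injective hpe
              exact hp
    rw [hset]
    exact e.measurable ((hT₁.inl_image).union (hT₂.inr_image))
  -- measurability of the coverage event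
  have hg : Measurable (fun q : Pt d × (Ω₁ ⊕ Ω₂) => ((q.1.1, q.2), q.1.2)) :=
    (measurable_fst.fst.prodMk measurable_snd).prodMk measurable_fst.snd
  have hmeasA : MeasurableSet {q : Pt d × (Ω₁ ⊕ Ω₂) |
      q.1.2 ∈ Sum.elim (C₁ q.1.1) (C₂ q.1.1) q.2} := hg hT
  -- how the mixed product measure evaluates
  have hprod₁ : P.prod (μ₁.map (Sum.inl : Ω₁ → Ω₁ ⊕ Ω₂)) =
      (P.prod μ₁).map (Prod.map id Sum.inl) := by
    rw [← Measure.map_prod_map _ _ measurable_id measurable_inl, Measure.map_id]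
  have hprod₂ : P.prod (μ₂.map (Sum.inr : Ω₂ → Ω₁ ⊕ Ω₂)) =
      (P.prod μ₂).map (Prod.map id Sum.inr) := by
    rw [← Measure.map_prod_map _ _ measurable_id measurable_inr, Measure.map_id]
  -- the mixing probability space
  refine ⟨Ω₁ ⊕ Ω₂, inferInstance,
    A • μ₁.map Sum.inl + B • μ₂.map Sum.inr, ?_,
    fun x => Sum.elim (C₁ x) (C₂ x), hT, ?_, ?_⟩
  · -- probability measure
    constructor
    simp [measure_univ, hABone]
  · -- coverage
    have hval : (P.prod (A • μ₁.map (Sum.inl : Ω₁ → Ω₁ ⊕ Ω₂) + B • μ₂.map Sum.inr))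
        {q : Pt d × (Ω₁ ⊕ Ω₂) | q.1.2 ∈ Sum.elim (C₁ q.1.1) (C₂ q.1.1) q.2} =
        A * (P.prod μ₁) {q : Pt d × Ω₁ | q.1.2 ∈ C₁ q.1.1 q.2} +
        B * (P.prod μ₂) {q : Pt d × Ω₂ | q.1.2 ∈ C₂ q.1.1 q.2} := by
      rw [Measure.prod_add, prod_smul_right, prod_smul_right, Measure.add_apply,
        Measure.smul_apply, Measure.smul_apply, smul_eq_mul, smul_eq_mul,
        hprod₁, hprod₂,
        Measure.map_apply (measurable_id.prodMap measurable_inl) hmeasA,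
        Measure.map_apply (measurable_id.prodMap measurable_inr) hmeasA]
      rfl
    rw [hval]
    calc ENNReal.ofReal (a * s₁ + b * s₂)
        ≤ ENNReal.ofReal (a * s₁) + ENNReal.ofReal (b * s₂) := ENNReal.ofReal_add_le
      _ = A * ENNReal.ofReal s₁ + B * ENNReal.ofReal s₂ := by
          rw [ENNReal.ofReal_mul ha, ENNReal.ofReal_mul hb]
      _ ≤ A * (P.prod μ₁) {q : Pt d × Ω₁ | q.1.2 ∈ C₁ q.1.1 q.2} +
          B * (P.prod μ₂) {q : Pt d × Ω₂ | q.1.2 ∈ C₂ q.1.1 q.2} :=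
          add_le_add (mul_le_mul_right hcov₁ A) (mul_le_mul_right hcov₂ B)
  · -- expected length
    haveI : IsProbabilityMeasure (P.map (Prod.fst : Pt d → Fin d → ℝ)) :=
      Measure.isProbabilityMeasure_map measurable_fst.aemeasurable
    have hQ₁ : (P.map Prod.fst).prod (μ₁.map (Sum.inl : Ω₁ → Ω₁ ⊕ Ω₂)) =
        ((P.map Prod.fst).prod μ₁).map (Prod.map id Sum.inl) := by
      rw [← Measure.map_prod_map _ _ measurable_id measurable_inl, Measure.map_id]
    have hQ₂ : (P.map Prod.fst).prod (μ₂.map (Sum.inr : Ω₂ → Ω₁ ⊕ Ω₂)) =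
        ((P.map Prod.fst).prod μ₂).map (Prod.map id Sum.inr) := by
      rw [← Measure.map_prod_map _ _ measurable_id measurable_inr, Measure.map_id]
    have hf : Measurable (fun q : (Fin d → ℝ) × (Ω₁ ⊕ Ω₂) =>
        volume (Sum.elim (C₁ q.1) (C₂ q.1) q.2)) :=
      measurable_measure_prodMk_left (ν := volume) hT
    rw [Measure.prod_add, prod_smul_right, prod_smul_right, lintegral_add_measure,
      lintegral_smul_measure, lintegral_smul_measure, hQ₁, hQ₂,
      lintegral_map hf (measurable_id.prodMap measurable_inl),
      lintegral_map hf (measurable_id.prodMap measurable_inr)]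
    rw [hr₁, hr₂]
    rfl

/-- **Convexity of the optimal-length function:** for any distribution `P` on `ℝ^d × ℝ`,
the map `β ↦ L_P(1-β)` is convex on `[0,1]`. -/
theorem LP_convex (d : ℕ) (P : Measure (Pt d)) [IsProbabilityMeasure P]
    (β₁ β₂ t : ℝ) (hβ₁ : β₁ ∈ Set.Icc (0 : ℝ) 1) (hβ₂ : β₂ ∈ Set.Icc (0 : ℝ) 1)
    (ht : t ∈ Set.Icc (0 : ℝ) 1) :
    LP d P (1 - ((1 - t) * β₁ + t * β₂)) ≤
      ENNReal.ofReal (1 - t) * LP d P (1 - β₁) + ENNReal.ofReal t * LP d P (1 - β₂) := by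
  obtain ⟨ht0, ht1⟩ := ht
  rcases eq_or_lt_of_le ht0 with h0 | h0
  · -- t = 0
    rw [← h0]
    norm_num
  rcases eq_or_lt_of_le ht1 with h1 | h1
  · -- t = 1
    rw [h1]
    norm_num
  -- 0 < t < 1
  set a : ℝ := 1 - t with haa
  set b : ℝ := t with hbb
  have harg : 1 - ((1 - t) * β₁ + t * β₂) = a * (1 - β₁) + b * (1 - β₂) := by
    simp only [haa, hbb]; ring
  rw [harg, LP_eq_sInf, LP_eq_sInf, LP_eq_sInf]
  set A : ℝ≥0∞ := ENNReal.ofReal a with hA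
  set B : ℝ≥0∞ := ENNReal.ofReal b with hB
  have hA0 : A ≠ 0 := by simp [hA, haa]; linarith
  have hB0 : B ≠ 0 := by simp [hB, hbb]; linarith
  have hAtop : A ≠ ∞ := ENNReal.ofReal_ne_top
  have hBtop : B ≠ ∞ := ENNReal.ofReal_ne_top
  rcases Set.eq_empty_or_nonempty (LPSet d P (1 - β₁)) with hS₁ | hS₁
  · rw [hS₁, sInf_empty, ENNReal.mul_top hA0]
    simp
  rcases Set.eq_empty_or_nonempty (LPSet d P (1 - β₂)) with hS₂ | hS₂
  · rw [hS₂, sInf_empty, ENNReal.mul_top hB0]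
    simp
  have key : ∀ r₁ ∈ LPSet d P (1 - β₁), ∀ r₂ ∈ LPSet d P (1 - β₂),
      sInf (LPSet d P (a * (1 - β₁) + b * (1 - β₂))) ≤ A * r₁ + B * r₂ := by
    intro r₁ h₁ r₂ h₂
    exact sInf_le (mix_mem d P (1 - β₁) (1 - β₂) a b (by simp [haa]; linarith)
      (le_of_lt h0) (by simp [haa, hbb]) h₁ h₂)
  have hS₁' : Nonempty (LPSet d P (1 - β₁)) := hS₁.to_subtype
  have hS₂' : Nonempty (LPSet d P (1 - β₂)) := hS₂.to_subtype
  calc sInf (LPSet d P (a * (1 - β₁) + b * (1 - β₂)))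
      ≤ ⨅ r₁ : LPSet d P (1 - β₁), ⨅ r₂ : LPSet d P (1 - β₂), (A * r₁ + B * r₂) :=
        le_iInf fun r₁ => le_iInf fun r₂ => key r₁ r₁.2 r₂ r₂.2
    _ = A * sInf (LPSet d P (1 - β₁)) + B * sInf (LPSet d P (1 - β₂)) := by
        rw [sInf_eq_iInf', sInf_eq_iInf',
          ENNReal.mul_iInf_of_ne hA0 hAtop, ENNReal.mul_iInf_of_ne hB0 hBtop,
          ENNReal.iInf_add]
        exact iInf_congr fun r₁ => ENNReal.add_iInf.symm
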